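/- Instability of the explicit Euler scheme under the CFL-type condition: if Δt · c_n > 2, then the explicit Euler scheme for the l-photon loss Lindbladian is unstable; concretely, for the density matrix ρ₀ = e_n e_nᴴ (the matrix with a single 1 in entry (n,n)), the iterates E^p(ρ₀) are unbounded: the (n,n) entry of E^p(ρ₀) equals (1 − Δt·c_n)^p, so its absolute value tends to +∞ as p → ∞. -/

import Mathlib

open Matrix Filter

/-- The truncated annihilation matrix on `ℂ^{n+1}`: `a e_k = √k e_{k-1}`. -/
noncomputable def ann (n : ℕ) : Matrix (Fin (n+1)) (Fin (n+1)) ℂ :=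
  Matrix.of fun i j => if (i : ℕ) + 1 = (j : ℕ) then ((Real.sqrt (j : ℕ) : ℝ) : ℂ) else 0

/-- The descending factorial `c_k = k(k-1)⋯(k-l+1)` as a real number. -/
noncomputable def cfac (l k : ℕ) : ℝ := (Nat.descFactorial k l : ℝ)

/-- The explicit Euler scheme for the `l`-photon loss Lindbladian,
`E(ρ) = ρ + Δt (L ρ Lᴴ − ½(LᴴL ρ + ρ LᴴL))` with `L = a^l`. -/
noncomputable def euler (n l : ℕ) (Δt : ℝ)
    (ρ : Matrix (Fin (n+1)) (Fin (n+1)) ℂ) : Matrix (Fin (n+1)) (Fin (n+1)) ℂ :=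
  ρ + (Δt : ℂ) • ((ann n ^ l) * ρ * (ann n ^ l)ᴴ
      - (2⁻¹ : ℂ) • ((ann n ^ l)ᴴ * (ann n ^ l) * ρ + ρ * ((ann n ^ l)ᴴ * (ann n ^ l))))

lemma ann_pow_apply (n l : ℕ) (i j : Fin (n+1)) :
    (ann n ^ l) i j =
      if (i : ℕ) + l = (j : ℕ) then ((Real.sqrt (Nat.descFactorial (j : ℕ) l) : ℝ) : ℂ)
      else 0 := by
  induction l generalizing i j with
  | zero =>
    simp [pow_zero, Matrix.one_apply, Fin.ext_iff]
  | succ m ih =>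
    rw [pow_succ, Matrix.mul_apply]
    by_cases h : (i : ℕ) + m ≤ n
    · set k₀ : Fin (n+1) := ⟨(i : ℕ) + m, by omega⟩ with hk₀
      rw [Finset.sum_eq_single k₀]
      · rw [ih]
        simp only [ann, Matrix.of_apply, hk₀]
        by_cases hij : (i : ℕ) + (m + 1) = (j : ℕ)
        · have h1 : (i : ℕ) + m = ((k₀ : Fin (n+1)) : ℕ) := rfl
          have h2 : ((k₀ : Fin (n+1)) : ℕ) + 1 = (j : ℕ) := by simp [hk₀]; omega
          have h2' : (i : ℕ) + m + 1 = (j : ℕ) := by omega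
          rw [if_pos trivial, if_pos h2', if_pos hij]
          have hd : (Nat.descFactorial (j : ℕ) (m+1)) =
              (j : ℕ) * Nat.descFactorial ((i : ℕ) + m) m := by
            have : (j : ℕ) = ((i : ℕ) + m) + 1 := by omega
            rw [this, Nat.succ_descFactorial_succ]
          rw [hd]
          push_cast
          rw [Real.sqrt_mul (by positivity), Complex.ofReal_mul]
          ring
        · rw [if_neg hij]
          by_cases h2 : ((k₀ : Fin (n+1)) : ℕ) + 1 = (j : ℕ)
          · exfalso; apply hij; simp [hk₀] at h2; omega
          · rw [if_neg h2, mul_zero]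
      · intro b _ hb
        rw [ih]
        have : ¬ ((i : ℕ) + m = (b : ℕ)) := by
          intro hc; apply hb; apply Fin.ext; simp [hk₀, ← hc]
        rw [if_neg this, zero_mul]
      · intro hc; exact absurd (Finset.mem_univ k₀) hc
    · have hrhs : ¬ ((i : ℕ) + (m + 1) = (j : ℕ)) := by
        have := j.isLt; omega
      rw [if_neg hrhs]
      apply Finset.sum_eq_zero
      intro k _
      rw [ih]
      have : ¬ ((i : ℕ) + m = (k : ℕ)) := by have := k.isLt; omega
      rw [if_neg this, zero_mul]

lemma LL_last (n l : ℕ) (hn : l ≤ n) (k : Fin (n+1)) :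
    ((ann n ^ l)ᴴ * (ann n ^ l)) (Fin.last n) k
      = if k = Fin.last n then ((cfac l n : ℝ) : ℂ) else 0 := by
  rw [Matrix.mul_apply]
  set j₀ : Fin (n+1) := ⟨n - l, by omega⟩ with hj₀
  rw [Finset.sum_eq_single j₀]
  · rw [Matrix.conjTranspose_apply, ann_pow_apply, ann_pow_apply]
    have h1 : ((j₀ : Fin (n+1)) : ℕ) + l = ((Fin.last n : Fin (n+1)) : ℕ) := by
      simp [hj₀]; omega
    rw [if_pos h1]
    by_cases hk : k = Fin.last n
    · have h2 : ((j₀ : Fin (n+1)) : ℕ) + l = (k : ℕ) := by rw [hk]; exact h1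
      rw [if_pos h2, if_pos hk]
      have : ((Fin.last n : Fin (n+1)) : ℕ) = n := Fin.val_last n
      rw [this]
      have hkn : (k : ℕ) = n := by rw [hk]; exact Fin.val_last n
      rw [hkn]
      rw [Complex.star_def, Complex.conj_ofReal, ← Complex.ofReal_mul,
        Real.mul_self_sqrt (by positivity)]
      rfl
    · have h2 : ¬ (((j₀ : Fin (n+1)) : ℕ) + l = (k : ℕ)) := by
        intro hc
        apply hk
        apply Fin.ext
        rw [← hc]
        simpa using h1
      rw [if_neg h2, if_neg hk, mul_zero]
  · intro b _ hb
    rw [Matrix.conjTranspose_apply, ann_pow_apply]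
    have : ¬ ((b : ℕ) + l = ((Fin.last n : Fin (n+1)) : ℕ)) := by
      intro hc
      apply hb
      apply Fin.ext
      simp only [Fin.val_last] at hc
      simp [hj₀]; omega
    rw [if_neg this, star_zero, zero_mul]
  · intro hc; exact absurd (Finset.mem_univ j₀) hc

lemma LL_last' (n l : ℕ) (hn : l ≤ n) (k : Fin (n+1)) :
    ((ann n ^ l)ᴴ * (ann n ^ l)) k (Fin.last n)
      = if k = Fin.last n then ((cfac l n : ℝ) : ℂ) else 0 := by
  have h : ((ann n ^ l)ᴴ * (ann n ^ l))ᴴ = (ann n ^ l)ᴴ * (ann n ^ l) := by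
    rw [Matrix.conjTranspose_mul, Matrix.conjTranspose_conjTranspose]
  calc ((ann n ^ l)ᴴ * (ann n ^ l)) k (Fin.last n)
      = (((ann n ^ l)ᴴ * (ann n ^ l))ᴴ) k (Fin.last n) := by rw [h]
    _ = star (((ann n ^ l)ᴴ * (ann n ^ l)) (Fin.last n) k) := by
        rw [Matrix.conjTranspose_apply]
    _ = _ := by
        rw [LL_last n l hn k]
        split <;> simp

lemma euler_last_last (n l : ℕ) (hl : 1 ≤ l) (hn : l ≤ n) (Δt : ℝ)
    (ρ : Matrix (Fin (n+1)) (Fin (n+1)) ℂ) :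
    euler n l Δt ρ (Fin.last n) (Fin.last n)
      = (((1 - Δt * cfac l n : ℝ) : ℂ)) * ρ (Fin.last n) (Fin.last n) := by
  have hrow : ∀ k : Fin (n+1), (ann n ^ l) (Fin.last n) k = 0 := by
    intro k
    rw [ann_pow_apply]
    have : ¬ (((Fin.last n : Fin (n+1)) : ℕ) + l = (k : ℕ)) := by
      have := k.isLt; simp only [Fin.val_last]; omega
    rw [if_neg this]
  have hA : ((ann n ^ l) * ρ * (ann n ^ l)ᴴ) (Fin.last n) (Fin.last n) = 0 := by
    rw [Matrix.mul_apply]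
    apply Finset.sum_eq_zero
    intro k _
    rw [Matrix.mul_apply]
    rw [Finset.sum_eq_zero, zero_mul]
    intro j _
    rw [hrow j, zero_mul]
  have hB : ((ann n ^ l)ᴴ * (ann n ^ l) * ρ) (Fin.last n) (Fin.last n)
      = ((cfac l n : ℝ) : ℂ) * ρ (Fin.last n) (Fin.last n) := by
    rw [Matrix.mul_apply]
    rw [Finset.sum_eq_single (Fin.last n)]
    · rw [LL_last n l hn, if_pos rfl]
    · intro b _ hb
      rw [LL_last n l hn, if_neg hb, zero_mul]
    · intro hc; exact absurd (Finset.mem_univ _) hc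
  have hC : (ρ * ((ann n ^ l)ᴴ * (ann n ^ l))) (Fin.last n) (Fin.last n)
      = ((cfac l n : ℝ) : ℂ) * ρ (Fin.last n) (Fin.last n) := by
    rw [Matrix.mul_apply]
    rw [Finset.sum_eq_single (Fin.last n)]
    · rw [LL_last' n l hn, if_pos rfl]; ring
    · intro b _ hb
      rw [LL_last' n l hn, if_neg hb, mul_zero]
    · intro hc; exact absurd (Finset.mem_univ _) hc
  simp only [euler, Matrix.add_apply, Matrix.smul_apply, Matrix.sub_apply, Matrix.add_apply,
    hA, hB, hC, smul_eq_mul]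
  push_cast
  ring

theorem stmt0 (l n : ℕ) (hl : 1 ≤ l) (hn : l ≤ n) (Δt : ℝ) (hΔt : 0 < Δt)
    (hCFL : 2 < Δt * cfac l n)
    (ρ₀ : Matrix (Fin (n+1)) (Fin (n+1)) ℂ)
    (hρ₀ : ρ₀ = Matrix.single (Fin.last n) (Fin.last n) 1) :
    (∀ p : ℕ, ((euler n l Δt)^[p] ρ₀) (Fin.last n) (Fin.last n)
        = (((1 - Δt * cfac l n : ℝ) : ℂ)) ^ p)
    ∧ Tendsto (fun p : ℕ =>
        ‖((euler n l Δt)^[p] ρ₀) (Fin.last n) (Fin.last n)‖) atTop atTop := by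
  have hmain : ∀ p : ℕ, ((euler n l Δt)^[p] ρ₀) (Fin.last n) (Fin.last n)
      = (((1 - Δt * cfac l n : ℝ) : ℂ)) ^ p := by
    intro p
    induction p with
    | zero =>
      simp [hρ₀, Matrix.single_apply_same]
    | succ q ih =>
      rw [Function.iterate_succ_apply', euler_last_last n l hl hn, ih, pow_succ]
      ring
  refine ⟨hmain, ?_⟩
  have habs : 1 < |1 - Δt * cfac l n| := by
    rw [abs_of_neg (by linarith)]
    linarith
  have := tendsto_pow_atTop_atTop_of_one_lt habs
  apply this.congr
  intro p
  rw [hmain p, norm_pow, Complex.norm_real, Real.norm_eq_abs]
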